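/- arXiv:1509.06611 — 3 statements merged into one kernel-verified Lean document; each statement's English description precedes it below -/
import Mathlib

section
/- The Bellman (relative value iteration) operator preserves monotonicity: if V : 𝒬 → ℝ is monotone, then the map Q ↦ min_{u∈𝒰} J_V(Q,u) is monotone with respect to ⪯; consequently, for any fixed reference state Q† ∈ 𝒬, the map Q ↦ min_{u∈𝒰} J_V(Q,u) − min_{u∈𝒰} J_V(Q†,u) is monotone. -/
open Finset

namespace HetNet

/-- The queue index set `I = {(n,m) : 0 ≤ n ≤ N, m ∈ M_n}`. -/
abbrev Idx {N M : ℕ} (cache : Fin (N + 1) → Finset (Fin M)) : Type :=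
  {p : Fin (N + 1) × Fin M // p.2 ∈ cache p.1}

/-- The feasible action space `𝒰`: each BS schedules a cached content or idles (`none`),
and the MBS (BS `0`) and the SBSs do not operate concurrently. -/
def Feasible {N M : ℕ} (cache : Fin (N + 1) → Finset (Fin M))
    (u : Fin (N + 1) → Option (Fin M)) : Prop :=
  (∀ n m, u n = some m → m ∈ cache n) ∧ (u 0 ≠ none → ∀ n, n ≠ 0 → u n = none)

instance {N M : ℕ} (cache : Fin (N + 1) → Finset (Fin M)) :
    DecidablePred (Feasible cache) := by
  intro u; unfold Feasible; infer_instance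

instance {N M : ℕ} (cache : Fin (N + 1) → Finset (Fin M)) :
    Nonempty {u : Fin (N + 1) → Option (Fin M) // Feasible cache u} :=
  ⟨⟨fun _ => none, fun _ _ h => by simp at h, fun h => absurd rfl h⟩⟩

/-- Queue `(n,m)` is served by action `u`. -/
def Served {N M : ℕ} (u : Fin (N + 1) → Option (Fin M)) (n : Fin (N + 1)) (m : Fin M) : Prop :=
  (n = 0 ∧ u 0 = some m) ∨ (n ≠ 0 ∧ (u 0 = some m ∨ u n = some m))

instance {N M : ℕ} (u : Fin (N + 1) → Option (Fin M)) (n : Fin (N + 1)) (m : Fin M) :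
    Decidable (Served u n m) := by unfold Served; infer_instance

/-- The queue transition map `T(Q,u,A)`. -/
def T {N M : ℕ} {cache : Fin (N + 1) → Finset (Fin M)} (bound : Idx cache → ℕ)
    (Q : Idx cache → ℕ) (u : Fin (N + 1) → Option (Fin M)) (A : Idx cache → ℕ) :
    Idx cache → ℕ := fun i =>
  if Served u i.val.1 i.val.2 then min (A i) (bound i) else min (Q i + A i) (bound i)

/-- The network power cost `p(u) = Σ_n p(n, u_n)` (with `p(n,0) = 0` for an idling BS). -/
def pcost {N M : ℕ} (p : Fin (N + 1) → Fin M → ℝ) (u : Fin (N + 1) → Option (Fin M)) : ℝ :=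
  ∑ n, (u n).elim 0 (p n)

/-- The sum request queue length `d(Q)`. -/
def dcost {N M : ℕ} {cache : Fin (N + 1) → Finset (Fin M)} (Q : Idx cache → ℕ) : ℝ :=
  ∑ i, (Q i : ℝ)

/-- The per-stage cost `g(Q,u) = d(Q) + w·p(u)`. -/
def gcost {N M : ℕ} (p : Fin (N + 1) → Fin M → ℝ) (w : ℝ)
    {cache : Fin (N + 1) → Finset (Fin M)}
    (Q : Idx cache → ℕ) (u : Fin (N + 1) → Option (Fin M)) : ℝ :=
  dcost Q + w * pcost p u

/-- The state-action cost `J_V(Q,u) = g(Q,u) + Σ_{A∈𝒜} P(A)·V(T(Q,u,A))`. -/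
def Jcost {N M : ℕ} (p : Fin (N + 1) → Fin M → ℝ) (w : ℝ)
    {cache : Fin (N + 1) → Finset (Fin M)} (bound : Idx cache → ℕ)
    {ι : Type} [Fintype ι] (P : ι → ℝ) (A : ι → Idx cache → ℕ)
    (V : (Idx cache → ℕ) → ℝ) (Q : Idx cache → ℕ)
    (u : Fin (N + 1) → Option (Fin M)) : ℝ :=
  gcost p w Q u + ∑ a, P a * V (T bound Q u (A a))

/-- the Bellman / relative value iteration operator preserves monotonicity:
if `V : 𝒬 → ℝ` is monotone, then `Q ↦ min_{u∈𝒰} J_V(Q,u)` is monotone w.r.t. `⪯`;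
consequently, for any fixed reference state `Q† ∈ 𝒬`, the map
`Q ↦ min_{u∈𝒰} J_V(Q,u) − min_{u∈𝒰} J_V(Q†,u)` is monotone. -/
theorem bellman_preserves_monotone {N M : ℕ} (cache : Fin (N + 1) → Finset (Fin M))
    (hcache0 : ∀ m : Fin M, m ∈ cache 0)
    (bound : Idx cache → ℕ)
    (p : Fin (N + 1) → Fin M → ℝ) (hp : ∀ n m, 0 ≤ p n m)
    (w : ℝ) (hw : 0 ≤ w)
    {ι : Type} [Fintype ι] (P : ι → ℝ) (A : ι → Idx cache → ℕ)
    (hP : ∀ a, 0 ≤ P a) (hPsum : ∑ a, P a = 1)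
    (V : (Idx cache → ℕ) → ℝ)
    (hV : ∀ Q₁ Q₂ : Idx cache → ℕ, (∀ i, Q₁ i ≤ bound i) → (∀ i, Q₂ i ≤ bound i) →
      (∀ i, Q₁ i ≤ Q₂ i) → V Q₁ ≤ V Q₂)
    (Qd : Idx cache → ℕ) (hQd : ∀ i, Qd i ≤ bound i) :
    ∀ Q₁ Q₂ : Idx cache → ℕ, (∀ i, Q₁ i ≤ bound i) → (∀ i, Q₂ i ≤ bound i) →
      (∀ i, Q₁ i ≤ Q₂ i) →
      (⨅ u : {u // Feasible cache u}, Jcost p w bound P A V Q₁ u.val) ≤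
          (⨅ u : {u // Feasible cache u}, Jcost p w bound P A V Q₂ u.val) ∧
        (⨅ u : {u // Feasible cache u}, Jcost p w bound P A V Q₁ u.val) -
            (⨅ u : {u // Feasible cache u}, Jcost p w bound P A V Qd u.val) ≤
          (⨅ u : {u // Feasible cache u}, Jcost p w bound P A V Q₂ u.val) -
            (⨅ u : {u // Feasible cache u}, Jcost p w bound P A V Qd u.val) := by
  intro Q₁ Q₂ h₁ h₂ h12
  have key : ∀ u : {u // Feasible cache u},
      Jcost p w bound P A V Q₁ u.val ≤ Jcost p w bound P A V Q₂ u.val := by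
    intro u
    have hT : ∀ a i, T bound Q₁ u.val (A a) i ≤ T bound Q₂ u.val (A a) i := by
      intro a i
      unfold T
      split
      · exact le_refl _
      · exact min_le_min (Nat.add_le_add_right (h12 i) _) (le_refl _)
    have hTb : ∀ (Q : Idx cache → ℕ) a i, T bound Q u.val (A a) i ≤ bound i := by
      intro Q a i; unfold T; split <;> exact min_le_right _ _
    have hd : dcost Q₁ ≤ dcost Q₂ :=
      Finset.sum_le_sum fun i _ => by exact_mod_cast h12 i
    have hs : (∑ a, P a * V (T bound Q₁ u.val (A a))) ≤
        ∑ a, P a * V (T bound Q₂ u.val (A a)) :=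
      Finset.sum_le_sum fun a _ =>
        mul_le_mul_of_nonneg_left (hV _ _ (hTb _ a) (hTb _ a) (hT a)) (hP a)
    unfold Jcost gcost
    linarith
  have hbdd : ∀ Q : Idx cache → ℕ,
      BddBelow (Set.range fun u : {u // Feasible cache u} => Jcost p w bound P A V Q u.val) :=
    fun Q => (Set.finite_range _).bddBelow
  have h1 : (⨅ u : {u // Feasible cache u}, Jcost p w bound P A V Q₁ u.val) ≤
      ⨅ u : {u // Feasible cache u}, Jcost p w bound P A V Q₂ u.val :=
    ciInf_mono (hbdd Q₁) key
  exact ⟨h1, by linarith⟩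

end HetNet
end

section
/- Monotonicity of Δ_{u,v}, Property 1 (Lemma 3(1)): let V : 𝒬 → ℝ be monotone and let u, v ∈ 𝒰 with u_0 = m for some content m ∈ M_0. If Q¹, Q² ∈ 𝒬 satisfy Q¹_{n′,m′} = Q²_{n′,m′} for all (n′,m′) ∈ I outside the set {(0,m)} ∪ {(n,m) : n ∈ N_m}, and Q¹_{n′,m′} ≥ Q²_{n′,m′} on that set, then Δ_{u,v}(Q¹) ≤ Δ_{u,v}(Q²); i.e., Δ_{u,v}(Q) is monotonically non-increasing in Q_{0,m} and in Q_{n,m} for every n ∈ N_m. -/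
open Finset

namespace HetNet

/-- Lemma 3(1): monotonicity of `Δ_{u,v}`, Property 1: let `V` be monotone
and let `u, v ∈ 𝒰` with `u_0 = m ∈ M_0`.  If `Q¹, Q²` agree on every coordinate of `I`
outside `{(0,m)} ∪ {(n,m) : n ∈ N_m}` and `Q¹ ≥ Q²` on that set, then
`Δ_{u,v}(Q¹) ≤ Δ_{u,v}(Q²)`, i.e. `Δ_{u,v}` is non-increasing in `Q_{0,m}` and in `Q_{n,m}`
for every `n ∈ N_m`. -/
theorem delta_monotone_MBS {N M : ℕ} (cache : Fin (N + 1) → Finset (Fin M))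
    (hcache0 : ∀ m : Fin M, m ∈ cache 0)
    (bound : Idx cache → ℕ)
    (p : Fin (N + 1) → Fin M → ℝ) (hp : ∀ n m, 0 ≤ p n m)
    (w : ℝ) (hw : 0 ≤ w)
    {ι : Type} [Fintype ι] (P : ι → ℝ) (A : ι → Idx cache → ℕ)
    (hP : ∀ a, 0 ≤ P a) (hPsum : ∑ a, P a = 1)
    (V : (Idx cache → ℕ) → ℝ)
    (hV : ∀ Q₁ Q₂ : Idx cache → ℕ, (∀ i, Q₁ i ≤ bound i) → (∀ i, Q₂ i ≤ bound i) →
      (∀ i, Q₁ i ≤ Q₂ i) → V Q₁ ≤ V Q₂)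
    (u v : Fin (N + 1) → Option (Fin M)) (hu : Feasible cache u) (hv : Feasible cache v)
    (m : Fin M) (hu0 : u 0 = some m)
    (Q₁ Q₂ : Idx cache → ℕ)
    (hQ₁ : ∀ i, Q₁ i ≤ bound i) (hQ₂ : ∀ i, Q₂ i ≤ bound i)
    (heq : ∀ i : Idx cache,
      ¬(i.val = ((0 : Fin (N + 1)), m) ∨ (i.val.1 ≠ 0 ∧ i.val.2 = m ∧ m ∈ cache i.val.1)) →
      Q₁ i = Q₂ i)
    (hge : ∀ i : Idx cache,
      (i.val = ((0 : Fin (N + 1)), m) ∨ (i.val.1 ≠ 0 ∧ i.val.2 = m ∧ m ∈ cache i.val.1)) →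
      Q₂ i ≤ Q₁ i) :
    Jcost p w bound P A V Q₁ u - Jcost p w bound P A V Q₁ v ≤
      Jcost p w bound P A V Q₂ u - Jcost p w bound P A V Q₂ v := by
  have hle : ∀ i, Q₂ i ≤ Q₁ i := by
    intro i
    by_cases h : i.val = ((0 : Fin (N + 1)), m) ∨
        (i.val.1 ≠ 0 ∧ i.val.2 = m ∧ m ∈ cache i.val.1)
    · exact hge i h
    · exact le_of_eq (heq i h).symm
  have hTu : T bound Q₁ u (A := fun i => 0) = T bound Q₁ u (A := fun i => 0) := rfl
  have hTueq : ∀ a, T bound Q₁ u (A a) = T bound Q₂ u (A a) := by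
    intro a
    funext i
    unfold T
    by_cases hs : Served u i.val.1 i.val.2
    · simp [hs]
    · have hnot : ¬(i.val = ((0 : Fin (N + 1)), m) ∨
          (i.val.1 ≠ 0 ∧ i.val.2 = m ∧ m ∈ cache i.val.1)) := by
        intro h
        apply hs
        rcases h with h | ⟨hn, hm, _⟩
        · left
          refine ⟨?_, ?_⟩
          · exact congrArg Prod.fst h
          · rw [hu0]; exact congrArg (fun x => some x.2) h.symm
        · right
          exact ⟨hn, Or.inl (by rw [hu0, hm])⟩
      rw [heq i hnot]
  have hTbound : ∀ (Q : Idx cache → ℕ) (uu : Fin (N + 1) → Option (Fin M)) a i,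
      T bound Q uu (A a) i ≤ bound i := by
    intro Q uu a i
    unfold T
    split <;> exact min_le_right _ _
  have hTvle : ∀ a i, T bound Q₂ v (A a) i ≤ T bound Q₁ v (A a) i := by
    intro a i
    unfold T
    split
    · exact le_rfl
    · exact min_le_min (Nat.add_le_add_right (hle i) _) le_rfl
  have hVle : ∀ a, V (T bound Q₂ v (A a)) ≤ V (T bound Q₁ v (A a)) :=
    fun a => hV _ _ (hTbound _ _ _) (hTbound _ _ _) (hTvle a)
  have hsum : ∑ a, P a * V (T bound Q₂ v (A a)) ≤ ∑ a, P a * V (T bound Q₁ v (A a)) :=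
    Finset.sum_le_sum fun a _ => mul_le_mul_of_nonneg_left (hVle a) (hP a)
  have hsumu : ∑ a, P a * V (T bound Q₁ u (A a)) = ∑ a, P a * V (T bound Q₂ u (A a)) := by
    apply Finset.sum_congr rfl
    intro a _
    rw [hTueq a]
  unfold Jcost gcost
  rw [hsumu]
  linarith [hsum]

end HetNet
end

section
/- Monotonicity of Δ̂ under the additive separable value approximation (intermediate step of Theorem 2): let V̂_{n,m} : {0,…,N_{n,m}} → ℝ be non-decreasing for every (n,m) ∈ I and set V̂(Q) = Σ_{(n,m)∈I} V̂_{n,m}(Q_{n,m}). Then Δ̂_{u,v} satisfies both monotonicity properties of Lemma 3: (1) if u_0 = m ∈ M_0, then Δ̂_{u,v}(Q) is monotonically non-increasing in Q_{0,m} and in Q_{n,m} for every n ∈ N_m; (2) if u_n = m ∈ M_n for some n ∈ {1,…,N}, then Δ̂_{u,v}(Q) is monotonically non-increasing in Q_{n,m} (all other coordinates held fixed, for every v ∈ 𝒰). -/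
open Finset

namespace HetNet

lemma key_pointwise {N M : ℕ} {cache : Fin (N + 1) → Finset (Fin M)}
    (bound : Idx cache → ℕ) (Vv : (i : Idx cache) → ℕ → ℝ)
    (hVv : ∀ i : Idx cache, ∀ q q' : ℕ, q ≤ q' → q' ≤ bound i → Vv i q ≤ Vv i q')
    (u v : Fin (N + 1) → Option (Fin M)) (Q₁ Q₂ A : Idx cache → ℕ) (i : Idx cache)
    (h : Q₁ i = Q₂ i ∨ (Served u i.val.1 i.val.2 ∧ Q₂ i ≤ Q₁ i)) :
    Vv i (T bound Q₁ u A i) - Vv i (T bound Q₁ v A i) ≤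
      Vv i (T bound Q₂ u A i) - Vv i (T bound Q₂ v A i) := by
  rcases h with h | ⟨hs, hle⟩
  · simp [T, h]
  · simp only [T, if_pos hs]
    by_cases hv : Served v i.val.1 i.val.2
    · simp [if_pos hv]
    · simp only [if_neg hv]
      apply sub_le_sub_left
      exact hVv i _ _ (min_le_min (add_le_add_left hle _) le_rfl) (min_le_right _ _)

lemma Jdiff_mono {N M : ℕ} {cache : Fin (N + 1) → Finset (Fin M)}
    (bound : Idx cache → ℕ)
    (p : Fin (N + 1) → Fin M → ℝ) (w : ℝ)
    {ι : Type} [Fintype ι] (P : ι → ℝ) (A : ι → Idx cache → ℕ)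
    (hP : ∀ a, 0 ≤ P a)
    (Vv : (i : Idx cache) → ℕ → ℝ)
    (hVv : ∀ i : Idx cache, ∀ q q' : ℕ, q ≤ q' → q' ≤ bound i → Vv i q ≤ Vv i q')
    (u v : Fin (N + 1) → Option (Fin M)) (Q₁ Q₂ : Idx cache → ℕ)
    (hQ : ∀ i : Idx cache, Q₁ i = Q₂ i ∨ (Served u i.val.1 i.val.2 ∧ Q₂ i ≤ Q₁ i)) :
    Jcost p w bound P A (fun Q => ∑ i, Vv i (Q i)) Q₁ u -
        Jcost p w bound P A (fun Q => ∑ i, Vv i (Q i)) Q₁ v ≤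
      Jcost p w bound P A (fun Q => ∑ i, Vv i (Q i)) Q₂ u -
        Jcost p w bound P A (fun Q => ∑ i, Vv i (Q i)) Q₂ v := by
  have hrw : ∀ Q : Idx cache → ℕ,
      Jcost p w bound P A (fun Q => ∑ i, Vv i (Q i)) Q u -
        Jcost p w bound P A (fun Q => ∑ i, Vv i (Q i)) Q v =
      w * pcost p u - w * pcost p v +
        ∑ a, P a * ∑ i, (Vv i (T bound Q u (A a) i) - Vv i (T bound Q v (A a) i)) := by
    intro Q
    simp only [Jcost, gcost, Finset.sum_sub_distrib, mul_sub]
    ring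
  rw [hrw Q₁, hrw Q₂]
  apply add_le_add_right
  refine Finset.sum_le_sum fun a _ => mul_le_mul_of_nonneg_left ?_ (hP a)
  exact Finset.sum_le_sum fun i _ => key_pointwise bound Vv hVv u v Q₁ Q₂ (A a) i (hQ i)

/-- intermediate step of Theorem 2: monotonicity of `Δ̂` under the additive
separable value approximation: if each `V̂_{n,m}` is non-decreasing on `{0,…,N_{n,m}}` and
`V̂(Q) = Σ V̂_{n,m}(Q_{n,m})`, then `Δ̂_{u,v}` satisfies both monotonicity properties of
Lemma 3: (1) if `u_0 = m ∈ M_0`, then `Δ̂_{u,v}(Q)` is non-increasing in `Q_{0,m}` and in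
`Q_{n,m}` for every `n ∈ N_m`; (2) if `u_n = m ∈ M_n` for some SBS `n`, then `Δ̂_{u,v}(Q)`
is non-increasing in `Q_{n,m}`. -/
theorem delta_hat_monotone {N M : ℕ} (cache : Fin (N + 1) → Finset (Fin M))
    (hcache0 : ∀ m : Fin M, m ∈ cache 0)
    (bound : Idx cache → ℕ)
    (p : Fin (N + 1) → Fin M → ℝ) (hp : ∀ n m, 0 ≤ p n m)
    (w : ℝ) (hw : 0 ≤ w)
    {ι : Type} [Fintype ι] (P : ι → ℝ) (A : ι → Idx cache → ℕ)
    (hP : ∀ a, 0 ≤ P a) (hPsum : ∑ a, P a = 1)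
    (Vv : (i : Idx cache) → ℕ → ℝ)
    (hVv : ∀ i : Idx cache, ∀ q q' : ℕ, q ≤ q' → q' ≤ bound i → Vv i q ≤ Vv i q') :
    (∀ u v : Fin (N + 1) → Option (Fin M), Feasible cache u → Feasible cache v →
      ∀ m : Fin M, u 0 = some m →
      ∀ Q₁ Q₂ : Idx cache → ℕ, (∀ i, Q₁ i ≤ bound i) → (∀ i, Q₂ i ≤ bound i) →
      (∀ i : Idx cache,
        ¬(i.val = ((0 : Fin (N + 1)), m) ∨ (i.val.1 ≠ 0 ∧ i.val.2 = m ∧ m ∈ cache i.val.1)) →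
        Q₁ i = Q₂ i) →
      (∀ i : Idx cache,
        (i.val = ((0 : Fin (N + 1)), m) ∨ (i.val.1 ≠ 0 ∧ i.val.2 = m ∧ m ∈ cache i.val.1)) →
        Q₂ i ≤ Q₁ i) →
      Jcost p w bound P A (fun Q => ∑ i, Vv i (Q i)) Q₁ u -
          Jcost p w bound P A (fun Q => ∑ i, Vv i (Q i)) Q₁ v ≤
        Jcost p w bound P A (fun Q => ∑ i, Vv i (Q i)) Q₂ u -
          Jcost p w bound P A (fun Q => ∑ i, Vv i (Q i)) Q₂ v) ∧
    (∀ u v : Fin (N + 1) → Option (Fin M), Feasible cache u → Feasible cache v →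
      ∀ n : Fin (N + 1), n ≠ 0 → ∀ m : Fin M, ∀ hm : m ∈ cache n, u n = some m →
      ∀ Q₁ Q₂ : Idx cache → ℕ, (∀ i, Q₁ i ≤ bound i) → (∀ i, Q₂ i ≤ bound i) →
      (∀ i : Idx cache, i.val ≠ (n, m) → Q₁ i = Q₂ i) →
      Q₂ ⟨(n, m), hm⟩ ≤ Q₁ ⟨(n, m), hm⟩ →
      Jcost p w bound P A (fun Q => ∑ i, Vv i (Q i)) Q₁ u -
          Jcost p w bound P A (fun Q => ∑ i, Vv i (Q i)) Q₁ v ≤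
        Jcost p w bound P A (fun Q => ∑ i, Vv i (Q i)) Q₂ u -
          Jcost p w bound P A (fun Q => ∑ i, Vv i (Q i)) Q₂ v) := by
  constructor
  · intro u v hu hv m hum Q₁ Q₂ hQ₁b hQ₂b heq hle
    apply Jdiff_mono bound p w P A hP Vv hVv u v Q₁ Q₂
    intro i
    by_cases hi : i.val = ((0 : Fin (N + 1)), m) ∨
        (i.val.1 ≠ 0 ∧ i.val.2 = m ∧ m ∈ cache i.val.1)
    · right
      refine ⟨?_, hle i hi⟩
      rcases hi with hi | ⟨h1, h2, _⟩
      · exact Or.inl ⟨congrArg Prod.fst hi, by rw [congrArg Prod.snd hi]; exact hum⟩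
      · exact Or.inr ⟨h1, Or.inl (h2 ▸ hum)⟩
    · exact Or.inl (heq i hi)
  · intro u v hu hv n hn m hm hun Q₁ Q₂ hQ₁b hQ₂b heq hle
    apply Jdiff_mono bound p w P A hP Vv hVv u v Q₁ Q₂
    intro i
    by_cases hi : i.val = (n, m)
    · right
      refine ⟨Or.inr ⟨?_, Or.inr ?_⟩, ?_⟩
      · rw [congrArg Prod.fst hi]; exact hn
      · rw [congrArg Prod.fst hi, congrArg Prod.snd hi]; exact hun
      · have : i = ⟨(n, m), hm⟩ := Subtype.ext hi
        rw [this]; exact hle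
    · exact Or.inl (heq i hi)

end HetNet
end
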